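/- Let A, B, C, D be four points in ℝ² with dist(A,B) = 1, dist(C,D) = 1, and dist(A,C) > 1, dist(A,D) > 1, dist(B,C) > 1, dist(B,D) > 1. Then the closed segments [A,B] and [C,D] are disjoint. -/
import Mathlib

theorem segments_disjoint (A B C D : EuclideanSpace ℝ (Fin 2))
    (hAB : dist A B = 1) (hCD : dist C D = 1)
    (hAC : 1 < dist A C) (hAD : 1 < dist A D)
    (hBC : 1 < dist B C) (hBD : 1 < dist B D) :
    Disjoint (segment ℝ A B) (segment ℝ C D) := by
  rw [Set.disjoint_left]
  intro P hP hP'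
  have h1 : dist A P + dist P B = 1 := by
    rw [← hAB]; exact dist_add_dist_of_mem_segment hP
  have h2 : dist C P + dist P D = 1 := by
    rw [← hCD]; exact dist_add_dist_of_mem_segment hP'
  have tAC := dist_triangle A P C
  have tAD := dist_triangle A P D
  have tBC := dist_triangle B P C
  have tBD := dist_triangle B P D
  have sPB : dist P B = dist B P := dist_comm _ _
  have sPC : dist P C = dist C P := dist_comm _ _
  rcases le_or_gt (dist A P) (1/2) with hA | hA <;>
    rcases le_or_gt (dist C P) (1/2) with hC | hC <;> linarith
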